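/- Let X be a path connected, locally path connected, semilocally simply connected topological space. For any x, y ∈ X, the set Π(X)(x,y) of homotopy classes rel endpoints of paths from x to y is a discrete subspace of the topological fundamental groupoid Π(X). -/

import Mathlib

open unitInterval

/-- Homotopy rel endpoints between two continuous paths `[0,1] → X`. -/
def PathHomotopicRel {X : Type*} [TopologicalSpace X] (c c' : C(I, X)) : Prop :=
  c 0 = c' 0 ∧ c 1 = c' 1 ∧
    ∃ H : C(I × I, X),
      (∀ t, H (0, t) = c t) ∧ (∀ t, H (1, t) = c' t) ∧
      (∀ s, H (s, 0) = c 0) ∧ (∀ s, H (s, 1) = c 1)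

/-- The topological fundamental groupoid: homotopy classes rel endpoints of paths,
with the quotient of the compact-open topology. -/
abbrev FundGroupoidSpace (X : Type*) [TopologicalSpace X] : Type _ :=
  Quot (PathHomotopicRel (X := X))

/-- The start/endpoint map `(s,e) : Π(X) → X × X`. -/
def startEndMap {X : Type*} [TopologicalSpace X] : FundGroupoidSpace X → X × X :=
  Quot.lift (fun c => (c 0, c 1)) fun _ _ h => Prod.ext h.1 h.2.1

/-- `X` is semilocally simply connected: every point has a neighborhood all of whose
loops are null-homotopic in `X`. -/
def SemilocSimplyConnected (X : Type*) [TopologicalSpace X] : Prop :=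
  ∀ x : X, ∃ U ∈ nhds x, ∀ c : C(I, X), (∀ t, c t ∈ U) → c 1 = c 0 →
    PathHomotopicRel c (ContinuousMap.const I (c 0))

/- ============ auxiliary material ============ -/

open Set

noncomputable section PHelperSection

noncomputable instance : ContractibleSpace I :=
  (convex_Icc (0:ℝ) 1).contractibleSpace (Set.nonempty_Icc.2 zero_le_one)

namespace PHelper

variable {X : Type*} [TopologicalSpace X]

theorem h_assoc {a b c d : X} (p : Path a b) (q : Path b c) (r : Path c d) :
    ((p.trans q).trans r).Homotopic (p.trans (q.trans r)) := ⟨Path.Homotopy.transAssoc p q r⟩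

theorem h_reflTrans {a b : X} (p : Path a b) : ((Path.refl a).trans p).Homotopic p :=
  ⟨Path.Homotopy.reflTrans p⟩

theorem h_transRefl {a b : X} (p : Path a b) : (p.trans (Path.refl b)).Homotopic p :=
  ⟨Path.Homotopy.transRefl p⟩

theorem h_symmTrans {a b : X} (p : Path a b) : (p.symm.trans p).Homotopic (Path.refl b) :=
  ⟨(Path.Homotopy.reflSymmTrans p).symm⟩

theorem h_transSymm {a b : X} (p : Path a b) : (p.trans p.symm).Homotopic (Path.refl a) :=
  ⟨(Path.Homotopy.reflTransSymm p).symm⟩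

theorem h_symm₂ {a b : X} {p q : Path a b} (h : p.Homotopic q) : p.symm.Homotopic q.symm :=
  Nonempty.map (fun F => F.symm₂) h

/-- universal transport: homotopy rel endpoints only depends on the underlying functions -/
theorem transport {a b a' b' : X} {p q : Path a b} {p' q' : Path a' b'}
    (hp : ∀ s, p s = p' s) (hq : ∀ s, q s = q' s) (h : p.Homotopic q) : p'.Homotopic q' := by
  have ha : a = a' := by rw [← p.source, ← p'.source]; exact hp 0
  have hb : b = b' := by rw [← p.target, ← p'.target]; exact hp 1
  subst ha; subst hb
  have e1 : p = p' := by ext s; exact hp s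
  have e2 : q = q' := by ext s; exact hq s
  rwa [e1, e2] at h

theorem cancel_mid {u v w : X} (γ : Path u v) (Z : Path u w) :
    (γ.trans (γ.symm.trans Z)).Homotopic Z :=
  ((h_assoc γ γ.symm Z).symm.trans ((h_transSymm γ).hcomp (Path.Homotopic.refl Z))).trans
    (h_reflTrans Z)

/-- from nullhomotopy of `a.trans b.symm` conclude `a ≃ b` -/
theorem exact_of_null {u v : X} {a b : Path u v}
    (h : (a.trans b.symm).Homotopic (Path.refl u)) : a.Homotopic b :=
  ((h_transRefl a).symm.trans
    (((Path.Homotopic.refl a).hcomp (h_symmTrans b)).symm.trans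
      ((h_assoc a b.symm b).symm.trans ((h.hcomp (Path.Homotopic.refl b)).trans
        (h_reflTrans b)))))

theorem conj {u v z : X} {γ : Path u v} {gseg : Path v z} {aa : Path u z}
    (h : (γ.trans gseg).Homotopic aa) : gseg.Homotopic (γ.symm.trans aa) := by
  have h0 : (γ.symm.trans (γ.symm.symm.trans gseg)).Homotopic gseg := cancel_mid γ.symm gseg
  rw [Path.symm_symm] at h0
  exact h0.symm.trans ((Path.Homotopic.refl γ.symm).hcomp h)

/-- middle-cancellation used in the induction step -/
theorem middle {a0 b0 a1 b1 a2 b2 : X} (g0 : Path a0 b0) (F1 : Path a0 a1) (g1 : Path a1 b1)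
    (F2 : Path a1 a2) (g2 : Path a2 b2) :
    ((g0.symm.trans (F1.trans g1)).trans (g1.symm.trans (F2.trans g2))).Homotopic
      (g0.symm.trans ((F1.trans F2).trans g2)) := by
  have inner1 : ((F1.trans g1).trans (g1.symm.trans (F2.trans g2))).Homotopic
      (F1.trans (F2.trans g2)) :=
    (h_assoc F1 g1 _).trans ((Path.Homotopic.refl F1).hcomp (cancel_mid g1 (F2.trans g2)))
  exact (h_assoc g0.symm (F1.trans g1) _).trans
    (((Path.Homotopic.refl g0.symm).hcomp
      (inner1.trans (h_assoc F1 F2 g2).symm)))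

/-- final reshuffle -/
theorem final_shuffle {x y u v u' v' : X} (cp : Path x y) (A : Path x u) (B : Path y v)
    (g0 : Path u u') (gN : Path v v') :
    (g0.symm.trans ((A.symm.trans (cp.trans B)).trans gN)).Homotopic
      ((A.trans g0).symm.trans (cp.trans (B.trans gN))) := by
  rw [Path.trans_symm]
  have inner : ((A.symm.trans (cp.trans B)).trans gN).Homotopic
      (A.symm.trans (cp.trans (B.trans gN))) :=
    (h_assoc A.symm (cp.trans B) gN).trans
      ((Path.Homotopic.refl A.symm).hcomp (h_assoc cp B gN))
  exact ((Path.Homotopic.refl g0.symm).hcomp inner).trans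
    (h_assoc g0.symm A.symm (cp.trans (B.trans gN))).symm

def cmPath (c : C(I,X)) : Path (c 0) (c 1) := ⟨c, rfl, rfl⟩

@[simp] theorem cmPath_apply (c : C(I,X)) (t : I) : cmPath c t = c t := rfl

/-- the affine path in `I` from `a` to `b` -/
def segm (a b : I) : Path a b where
  toFun := fun s => ⟨(1 - (s:ℝ)) * a + s * b, by
    constructor
    · have := s.2.1; have := s.2.2; have := a.2.1; have := b.2.1
      nlinarith
    · have := s.2.1; have := s.2.2; have := a.2.2; have := b.2.2
      nlinarith⟩
  continuous_toFun := by
    apply Continuous.subtype_mk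
    fun_prop
  source' := by ext; simp
  target' := by ext; simp

@[simp] theorem segm_apply (a b : I) (s : I) :
    (segm a b s : ℝ) = (1 - (s:ℝ)) * a + s * b := rfl

theorem segm_mem_Icc {a b : I} (hab : a ≤ b) (s : I) : segm a b s ∈ Icc a b := by
  have h1 := s.2.1; have h2 := s.2.2
  have hab' : (a:ℝ) ≤ b := hab
  constructor
  · rw [← Subtype.coe_le_coe]; simp only [segm_apply]; nlinarith
  · rw [← Subtype.coe_le_coe]; simp only [segm_apply]; nlinarith

theorem segm_self (a : I) : segm a a = Path.refl a := by
  ext s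
  simp [segm_apply, Path.refl]
  show _ = (a : ℝ); ring

theorem refl_map {Y : Type*} [TopologicalSpace Y] (a : X) {f : X → Y} (hf : Continuous f) :
    (Path.refl a).map hf = Path.refl (f a) := by
  ext s; rfl

/-- bridge: from a `Path.Homotopic` fact to `PathHomotopicRel` -/
theorem phr_of {f g : C(I,X)} {a b : X} {p q : Path a b}
    (hp : ∀ s, p s = f s) (hq : ∀ s, q s = g s) (h : p.Homotopic q) : PathHomotopicRel f g := by
  obtain ⟨F⟩ := h
  refine ⟨by rw [← hp 0, ← hq 0, p.source, q.source], by rw [← hp 1, ← hq 1, p.target, q.target],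
    F.toContinuousMap, ?_, ?_, ?_, ?_⟩
  · intro t; rw [← hp t]; exact F.apply_zero t
  · intro t; rw [← hq t]; exact F.apply_one t
  · intro s; rw [← hp 0]; exact F.eq_fst s (by norm_num)
  · intro s; rw [← hp 1]; exact F.eq_fst s (by norm_num)

/-- bridge: from `PathHomotopicRel` to a `Path.Homotopic` fact -/
theorem homotopic_of_phr {f g : C(I,X)} (h : PathHomotopicRel f g) :
    (cmPath f).Homotopic ((cmPath g).cast h.1 h.2.1) := by
  obtain ⟨h0, h1, H, H0, H1, Hs0, Hs1⟩ := h
  exact ⟨{ toContinuousMap := H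
           map_zero_left := fun t => H0 t
           map_one_left := fun t => H1 t
           prop' := by
             intro s t ht
             rcases ht with ht | ht
             · subst ht; exact Hs0 s
             · simp only [mem_singleton_iff] at ht; subst ht; exact Hs1 s }⟩

theorem phr_symm {f g : C(I,X)} (h : PathHomotopicRel f g) : PathHomotopicRel g f :=
  phr_of (fun _ => rfl) (fun _ => rfl) (homotopic_of_phr h).symm

/-- null-homotopy of small loops, from `SemilocSimplyConnected`-style data -/
theorem loop_null {U : Set X}
    (hU : ∀ c : C(I, X), (∀ t, c t ∈ U) → c 1 = c 0 →
      PathHomotopicRel c (ContinuousMap.const I (c 0)))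
    {u : X} (L : Path u u) (hL : ∀ t, L t ∈ U) : L.Homotopic (Path.refl u) := by
  obtain ⟨h0, h1, H, H0, H1, Hs0, Hs1⟩ :=
    hU L.toContinuousMap (fun t => hL t) (L.target.trans L.source.symm)
  exact ⟨{ toContinuousMap := H
           map_zero_left := fun t => H0 t
           map_one_left := fun t => by
             show H (1, t) = _
             rw [H1 t]
             simp [L.source]
           prop' := by
             intro s t ht
             rcases ht with ht | ht
             · subst ht; exact Hs0 s
             · simp only [mem_singleton_iff] at ht; subst ht; exact Hs1 s }⟩

theorem slsc' (hX : SemilocSimplyConnected X) (z : X) :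
    ∃ U : Set X, IsOpen U ∧ z ∈ U ∧
      ∀ (u : X) (L : Path u u), (∀ t, L t ∈ U) → L.Homotopic (Path.refl u) := by
  obtain ⟨U, hU, hprop⟩ := hX z
  obtain ⟨O, hOU, hO, hzO⟩ := mem_nhds_iff.1 hU
  exact ⟨O, hO, hzO, fun u L hL =>
    loop_null (fun c hc h10 => hprop c (fun t => hOU (hc t)) h10) L hL⟩

theorem self_mem_aux {x y a b : X} (P : Path a b) (ha : a = x) (hb : b = y) :
    P.Homotopic ((((Path.refl x).cast rfl ha).symm).trans
      ((P.cast ha.symm hb.symm).trans ((Path.refl y).cast rfl hb))) := by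
  subst ha; subst hb
  show P.Homotopic ((Path.refl a).symm.trans (P.trans (Path.refl b)))
  rw [Path.refl_symm]
  exact ((h_reflTrans _).trans (h_transRefl _)).symm

theorem sat_aux {x y : X} (cp : Path x y) {a b a' b' : X} (P : Path a b) (Q : Path a' b')
    (ha : a = a') (hb : b = b') (hPQ : P.Homotopic (Q.cast ha hb))
    (α : Path x a) (β : Path y b) (h : P.Homotopic (α.symm.trans (cp.trans β))) :
    Q.Homotopic (((α.cast rfl ha.symm).symm).trans (cp.trans (β.cast rfl hb.symm))) := by
  subst ha; subst hb
  exact hPQ.symm.trans h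

theorem fiber_aux {x y : X} {U₀ U₁ : Set X}
    (h₀ : ∀ (u : X) (L : Path u u), (∀ t, L t ∈ U₀) → L.Homotopic (Path.refl u))
    (h₁ : ∀ (u : X) (L : Path u u), (∀ t, L t ∈ U₁) → L.Homotopic (Path.refl u))
    (cp : Path x y) {a b : X} (P : Path a b) (ha : a = x) (hb : b = y)
    (α : Path x a) (β : Path y b) (hα : ∀ s, α s ∈ U₀) (hβ : ∀ s, β s ∈ U₁)
    (h : P.Homotopic (α.symm.trans (cp.trans β))) : P.Homotopic (cp.cast ha hb) := by
  subst ha; subst hb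
  have hα' : α.Homotopic (Path.refl a) := h₀ a α hα
  have hβ' : β.Homotopic (Path.refl b) := h₁ b β hβ
  refine h.trans ?_
  show Path.Homotopic _ cp
  refine ((h_symm₂ hα').hcomp ((Path.Homotopic.refl cp).hcomp hβ')).trans ?_
  rw [Path.refl_symm]
  exact (h_reflTrans _).trans (h_transRefl cp)

theorem trans_congr' {a b c a' b' c' : X} {p : Path a b} {q : Path b c}
    {p' : Path a' b'} {q' : Path b' c'}
    (hp : ∀ s, p s = p' s) (hq : ∀ s, q s = q' s) (s : I) :
    (p.trans q) s = (p'.trans q') s := by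
  rw [Path.trans_apply, Path.trans_apply]
  split_ifs
  · exact hp _
  · exact hq _

end PHelper

end PHelperSection

namespace PHelper

set_option maxHeartbeats 2000000 in
theorem key {X : Type*} [TopologicalSpace X] [LocallyPathConnectedSpace X]
    (hX : SemilocSimplyConnected X) {x y : X} (c₀ : C(I,X)) (hc0 : c₀ 0 = x) (hc1 : c₀ 1 = y) :
    ∃ S : Set C(I,X), IsOpen S ∧ c₀ ∈ S ∧
      (∀ f g, f ∈ S → PathHomotopicRel f g → g ∈ S) ∧
      (∀ g ∈ S, g 0 = x → g 1 = y → PathHomotopicRel c₀ g) := by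
  obtain ⟨U₀, hU₀o, hxU₀, hU₀n⟩ := slsc' hX x
  obtain ⟨U₁, hU₁o, hyU₁, hU₁n⟩ := slsc' hX y
  set cp : Path x y := (cmPath c₀).cast hc0.symm hc1.symm with hcp
  refine ⟨{f : C(I,X) | ∃ α : Path x (f 0), ∃ β : Path y (f 1),
      (∀ s, α s ∈ U₀) ∧ (∀ s, β s ∈ U₁) ∧
      (cmPath f).Homotopic (α.symm.trans (cp.trans β))}, ?_, ?_, ?_, ?_⟩
  · -- openness
    rw [isOpen_iff_forall_mem_open]
    rintro f ⟨α, β, hα, hβ, hf⟩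
    have hf0U : f 0 ∈ U₀ := α.target ▸ hα 1
    have hf1U : f 1 ∈ U₁ := β.target ▸ hβ 1
    choose V hVo hVm hVn using fun s : I => slsc' hX (f s)
    obtain ⟨t, ht0, htmono, ⟨N, htN⟩, hsub⟩ :=
      exists_monotone_Icc_subset_open_cover_unitInterval
        (c := fun s : I => f ⁻¹' (V s)) (fun s => (hVo s).preimage f.continuous)
        (fun u _ => Set.mem_iUnion.2 ⟨u, hVm u⟩)
    choose sel hsel using hsub
    set VV : ℕ → Set X := fun n => V (sel n) with hVV
    have hVVo : ∀ n, IsOpen (VV n) := fun n => hVo _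
    have hVVn : ∀ (n : ℕ) (u : X) (L : Path u u), (∀ s, L s ∈ VV n) →
        L.Homotopic (Path.refl u) := fun n => hVn _
    have hmapsf : ∀ n, Set.MapsTo f (Set.Icc (t n) (t (n+1))) (VV n) := fun n u hu => hsel n hu
    set A : ℕ → Set X := fun k =>
      (if k = 0 then U₀ else VV (k-1)) ∩ VV k ∩ (if N ≤ k then U₁ else Set.univ) with hA
    have hAo : ∀ k, IsOpen (A k) := by
      intro k
      refine ((IsOpen.inter ?_ (hVVo k)).inter ?_) <;> split_ifs
      exacts [hU₀o, hVVo _, hU₁o, isOpen_univ]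
    have hfA : ∀ k, f (t k) ∈ A k := by
      intro k
      refine ⟨⟨?_, hmapsf k ⟨le_rfl, htmono (Nat.le_succ k)⟩⟩, ?_⟩
      · split_ifs with h
        · rw [h, ht0]; exact hf0U
        · have hk : k - 1 + 1 = k := Nat.succ_pred_eq_of_pos (Nat.pos_of_ne_zero h)
          exact hmapsf (k-1) ⟨htmono (Nat.sub_le k 1), by rw [hk]⟩
      · split_ifs with h
        · rw [htN k h]; exact hf1U
        · trivial
    have hA2 : ∀ k, A k ⊆ VV k := fun k z hz => hz.1.2
    have hA1 : ∀ k, A (k+1) ⊆ VV k := fun k z hz => by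
      have h := hz.1.1
      rw [if_neg (Nat.succ_ne_zero k)] at h
      simpa using h
    have hA0 : A 0 ⊆ U₀ := fun z hz => by
      have h := hz.1.1; rwa [if_pos rfl] at h
    have hAN : A N ⊆ U₁ := fun z hz => by
      have h := hz.2; rwa [if_pos le_rfl] at h
    set W : ℕ → Set X := fun k => pathComponentIn (A k) (f (t k)) with hW
    have hWo : ∀ k, IsOpen (W k) := fun k => (hAo k).pathComponentIn _
    have hWm : ∀ k, f (t k) ∈ W k := fun k => mem_pathComponentIn_self (hfA k)
    have hWc : ∀ k, IsPathConnected (W k) := fun k => isPathConnected_pathComponentIn (hfA k)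
    have hWsub : ∀ k, W k ⊆ A k := fun k => pathComponentIn_subset
    refine ⟨{g : C(I,X) | (∀ k < N, Set.MapsTo g (Set.Icc (t k) (t (k+1))) (VV k)) ∧
        ∀ k ≤ N, g (t k) ∈ W k}, ?_, ?_, ⟨fun k _ => hmapsf k, fun k _ => hWm k⟩⟩
    · -- tube ⊆ S
      rintro g ⟨hg1, hg2⟩
      have hjoin : ∀ k, k ≤ N → JoinedIn (W k) (f (t k)) (g (t k)) := fun k hk =>
        (hWc k).joinedIn _ (hWm k) _ (hg2 k hk)
      set γ : ∀ k, k ≤ N → Path (f (t k)) (g (t k)) := fun k hk => (hjoin k hk).somePath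
        with hγdef
      have hγ : ∀ k (hk : k ≤ N) (s : I), γ k hk s ∈ W k := fun k hk =>
        (hjoin k hk).somePath_mem
      have hsplit : ∀ (h : C(I,X)) (k : ℕ),
          ((segm (t 0) (t (k+1))).map h.continuous).Homotopic
          (((segm (t 0) (t k)).map h.continuous).trans
            ((segm (t k) (t (k+1))).map h.continuous)) := by
        intro h k
        have hI : (segm (t 0) (t (k+1))).Homotopic
            ((segm (t 0) (t k)).trans (segm (t k) (t (k+1)))) :=
          SimplyConnectedSpace.paths_homotopic _ _
        have := hI.map h
        rwa [Path.map_trans] at this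
      have main : ∀ k (hk : k ≤ N), ((segm (t 0) (t k)).map g.continuous).Homotopic
          (((γ 0 (Nat.zero_le N)).symm).trans
            (((segm (t 0) (t k)).map f.continuous).trans (γ k hk))) := by
        intro k
        induction k with
        | zero =>
          intro hk
          rw [segm_self, refl_map, refl_map]
          exact (((Path.Homotopic.refl _).hcomp (h_reflTrans (γ 0 hk))).trans
            (h_symmTrans (γ 0 hk))).symm
        | succ k ih =>
          intro hk1
          have hkN : k ≤ N := Nat.le_of_succ_le hk1
          have hklt : k < N := hk1
          set γk := γ k hkN
          set γk1 := γ (k+1) hk1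
          set γ0 := γ 0 (Nat.zero_le N)
          set F1 := (segm (t 0) (t k)).map f.continuous
          set F2 := (segm (t k) (t (k+1))).map f.continuous with hF2
          set G2 := (segm (t k) (t (k+1))).map g.continuous with hG2
          have hab : t k ≤ t (k+1) := htmono (Nat.le_succ k)
          have hF2r : ∀ s, F2 s ∈ VV k := fun s => hmapsf k (segm_mem_Icc hab s)
          have hG2r : ∀ s, G2 s ∈ VV k := fun s => hg1 k hklt (segm_mem_Icc hab s)
          have hγkr : ∀ s, γk s ∈ VV k := fun s => hA2 k (hWsub k (hγ k hkN s))
          have hγk1r : ∀ s, γk1 s ∈ VV k := fun s => hA1 k (hWsub (k+1) (hγ (k+1) hk1 s))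
          set a := F2.trans γk1 with ha
          set b := γk.trans G2 with hb
          have hloopr : Set.range (a.trans b.symm) ⊆ VV k := by
            rw [Path.trans_range, Path.symm_range, Path.trans_range, Path.trans_range]
            refine Set.union_subset (Set.union_subset ?_ ?_) (Set.union_subset ?_ ?_) <;>
              rw [Set.range_subset_iff]
            exacts [hF2r, hγk1r, hγkr, hG2r]
          have hab' : a.Homotopic b :=
            exact_of_null (hVVn k _ _ (fun s => hloopr (Set.mem_range_self s)))
          have hSC : G2.Homotopic (γk.symm.trans a) := conj hab'.symm
          exact (hsplit g k).trans (((ih hkN).hcomp hSC).trans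
            ((middle γ0 F1 γk F2 γk1).trans
              ((Path.Homotopic.refl γ0.symm).hcomp
                (((hsplit f k).symm.hcomp (Path.Homotopic.refl γk1))))))
      -- final assembly
      have htN' : t N = 1 := htN N le_rfl
      have PN := main N le_rfl
      set γ0' : Path (f 0) (g 0) :=
        (γ 0 (Nat.zero_le N)).cast (congrArg f ht0.symm) (congrArg g ht0.symm) with hγ0'
      set γN' : Path (f 1) (g 1) :=
        (γ N le_rfl).cast (congrArg f htN'.symm) (congrArg g htN'.symm) with hγN'
      have hseg_id : ∀ s : I, segm (t 0) (t N) s = s := by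
        intro s
        apply Subtype.ext
        have e0 : ((t 0 : I) : ℝ) = 0 := by rw [ht0]; rfl
        have e1 : ((t N : I) : ℝ) = 1 := by rw [htN']; rfl
        simp [segm_apply, e0, e1]
      have KEY : (cmPath g).Homotopic (γ0'.symm.trans ((cmPath f).trans γN')) := by
        have hq : ∀ s, ((γ 0 (Nat.zero_le N)).symm.trans
            (((segm (t 0) (t N)).map f.continuous).trans (γ N le_rfl))) s =
            (γ0'.symm.trans ((cmPath f).trans γN')) s := fun s =>
          trans_congr'
            (show ∀ u, (γ 0 (Nat.zero_le N)).symm u = γ0'.symm u from fun _ => rfl)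
            (trans_congr'
              (show ∀ u, ((segm (t 0) (t N)).map f.continuous) u = (cmPath f) u from
                fun u => congrArg f (hseg_id u))
              (show ∀ u, (γ N le_rfl) u = γN' u from fun _ => rfl)) s
        exact transport (fun s => congrArg g (hseg_id s)) hq PN
      refine ⟨α.trans γ0', β.trans γN', ?_, ?_, ?_⟩
      · intro s
        have : (α.trans γ0') s ∈ Set.range (α.trans γ0') := Set.mem_range_self s
        rw [Path.trans_range] at this
        rcases this with h | h
        · obtain ⟨u, hu⟩ := h; rw [← hu]; exact hα u
        · obtain ⟨u, hu⟩ := h; rw [← hu]; exact hA0 (hWsub 0 (hγ 0 (Nat.zero_le N) u))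
      · intro s
        have : (β.trans γN') s ∈ Set.range (β.trans γN') := Set.mem_range_self s
        rw [Path.trans_range] at this
        rcases this with h | h
        · obtain ⟨u, hu⟩ := h; rw [← hu]; exact hβ u
        · obtain ⟨u, hu⟩ := h; rw [← hu]; exact hAN (hWsub N (hγ N le_rfl u))
      · exact (KEY.trans ((Path.Homotopic.refl γ0'.symm).hcomp
          (hf.hcomp (Path.Homotopic.refl γN')))).trans (final_shuffle cp α β γ0' γN')
    · -- tube is open
      have : {g : C(I,X) | (∀ k < N, Set.MapsTo g (Set.Icc (t k) (t (k+1))) (VV k)) ∧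
          ∀ k ≤ N, g (t k) ∈ W k} =
          (⋂ k ∈ Finset.range N, {g : C(I,X) | Set.MapsTo g (Set.Icc (t k) (t (k+1))) (VV k)}) ∩
          (⋂ k ∈ Finset.range (N+1), {g : C(I,X) | g (t k) ∈ W k}) := by
        ext g
        simp [Set.mem_iInter, Nat.lt_succ_iff]
      rw [this]
      exact (isOpen_biInter_finset fun k _ =>
          ContinuousMap.isOpen_setOf_mapsTo isClosed_Icc.isCompact (hVVo k)).inter
        (isOpen_biInter_finset fun k _ =>
          (hWo k).preimage (continuous_eval_const (t k)))
  · -- c₀ ∈ S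
    exact ⟨(Path.refl x).cast rfl hc0, (Path.refl y).cast rfl hc1,
      fun _ => hxU₀, fun _ => hyU₁, self_mem_aux (cmPath c₀) hc0 hc1⟩
  · -- saturation
    rintro f g ⟨α, β, hα, hβ, hf⟩ hrel
    exact ⟨α.cast rfl hrel.1.symm, β.cast rfl hrel.2.1.symm, fun s => hα s, fun s => hβ s,
      sat_aux cp (cmPath f) (cmPath g) hrel.1 hrel.2.1 (homotopic_of_phr hrel) α β hf⟩
  · -- fiber
    rintro g ⟨α, β, hα, hβ, hg⟩ hg0 hg1
    exact phr_of (p := cp.cast hg0 hg1) (q := cmPath g) (fun _ => rfl) (fun _ => rfl)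
      (fiber_aux hU₀n hU₁n cp (cmPath g) hg0 hg1 α β hα hβ hg).symm

end PHelper

theorem stmt2 {X : Type*} [TopologicalSpace X] [PathConnectedSpace X]
    [LocallyPathConnectedSpace X] (hX : SemilocSimplyConnected X) (x y : X) :
    DiscreteTopology {q : FundGroupoidSpace X // startEndMap q = (x, y)} := by
  apply discreteTopology_iff_isOpen_singleton.mpr
  rintro ⟨q₀, hq₀⟩
  obtain ⟨c₀, rfl⟩ := Quot.exists_rep q₀
  have hc0 : c₀ 0 = x := congrArg Prod.fst hq₀
  have hc1 : c₀ 1 = y := congrArg Prod.snd hq₀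
  obtain ⟨S, hSo, hSc, hSsat, hSfib⟩ := PHelper.key hX c₀ hc0 hc1
  have hsat2 : ∀ a b, Relation.EqvGen PathHomotopicRel a b → (a ∈ S ↔ b ∈ S) := by
    intro a b h
    induction h with
    | rel a b hr => exact ⟨fun ha => hSsat _ _ ha hr, fun hb => hSsat _ _ hb (PHelper.phr_symm hr)⟩
    | refl => exact Iff.rfl
    | symm _ _ _ ih => exact ih.symm
    | trans _ _ _ _ _ ih1 ih2 => exact ih1.trans ih2
  set V : Set (FundGroupoidSpace X) := Quot.mk _ '' S with hV
  have hpre : Quot.mk PathHomotopicRel ⁻¹' V = S := by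
    ext g
    constructor
    · rintro ⟨h, hhS, heq⟩
      exact (hsat2 h g (Quot.eqvGen_exact heq)).mp hhS
    · intro hg
      exact ⟨g, hg, rfl⟩
  have hVo : IsOpen V := by
    rw [← isQuotientMap_quot_mk.isOpen_preimage, hpre]
    exact hSo
  rw [isOpen_induced_iff]
  refine ⟨V, hVo, ?_⟩
  ext ⟨q', hq'⟩
  simp only [Set.mem_preimage, Set.mem_singleton_iff]
  constructor
  · intro hmem
    obtain ⟨g, hgS, hgq⟩ := hmem
    have hg0 : g 0 = x := congrArg Prod.fst (hgq ▸ hq' : startEndMap (Quot.mk _ g) = (x, y))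
    have hg1 : g 1 = y := congrArg Prod.snd (hgq ▸ hq' : startEndMap (Quot.mk _ g) = (x, y))
    have hrel : PathHomotopicRel c₀ g := hSfib g hgS hg0 hg1
    apply Subtype.ext
    show q' = Quot.mk _ c₀
    rw [← hgq]
    exact (Quot.sound hrel).symm
  · intro h
    have : q' = Quot.mk PathHomotopicRel c₀ := congrArg Subtype.val h
    rw [this]
    exact ⟨c₀, hSc, rfl⟩
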